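/- Let η > 0, κ ∈ ℝ^{n×n} with κ_ij > 0, r, c ∈ Δ^n, ε_1 ≥ 0, ε_2 ≥ 0. Let x̃ = (α̃, β̃, Ũ) with Ũ ∈ ℝ^{d×k}, Ũ^TŨ = I_k, and suppose ‖Proj_{T_Ũ S}(−2 V_{π_η(x̃,κ)} Ũ)‖_F ≤ ε_1. Then for every π̂ ∈ Π(r,c) with ‖π̂ − π_η(x̃,κ)‖₁ ≤ ε_2, it holds that ‖Proj_{T_Ũ S}(−2 V_{π̂} Ũ)‖_F ≤ ε_1 + 2‖C‖_∞ ε_2. -/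

import Mathlib

open scoped BigOperators
open Matrix

noncomputable section

namespace PRWPaper

/-- Squared Euclidean norm of a vector in `ℝ^d`. -/
def sqnorm {d : ℕ} (v : Fin d → ℝ) : ℝ := ∑ l, (v l) ^ 2

/-- `‖Uᵀ w‖²  = ⟨w wᵀ, U Uᵀ⟩` for `U ∈ ℝ^{d×k}`, `w ∈ ℝ^d`. -/
def projSq {d k : ℕ} (U : Matrix (Fin d) (Fin k) ℝ) (w : Fin d → ℝ) : ℝ :=
  ∑ m, (∑ l, U l m * w l) ^ 2

/-- `C_ij = ‖x_i - y_j‖²`. -/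
def costC {n d : ℕ} (x y : Fin n → Fin d → ℝ) (i j : Fin n) : ℝ :=
  sqnorm (fun l => x i l - y j l)

/-- `[C(U)]_ij = ‖Uᵀ (x_i - y_j)‖² = ⟨M_ij, U Uᵀ⟩`. -/
def costCU {n d k : ℕ} (x y : Fin n → Fin d → ℝ) (U : Matrix (Fin d) (Fin k) ℝ)
    (i j : Fin n) : ℝ :=
  projSq U (fun l => x i l - y j l)

/-- `‖C‖_∞ = max_{i,j} |C_ij|`. -/
def CInf {n d : ℕ} (x y : Fin n → Fin d → ℝ) : ℝ :=
  ⨆ p : Fin n × Fin n, |costC x y p.1 p.2|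

/-- `φ_ij(α, β, U) = α_i + β_j + ⟨M_ij, U Uᵀ⟩`. -/
def phi {n d k : ℕ} (x y : Fin n → Fin d → ℝ) (α β : Fin n → ℝ)
    (U : Matrix (Fin d) (Fin k) ℝ) (i j : Fin n) : ℝ :=
  α i + β j + costCU x y U i j

/-- `min_{i,j} φ_ij(α, β, U)`. -/
def phiMin {n d k : ℕ} (x y : Fin n → Fin d → ℝ) (α β : Fin n → ℝ)
    (U : Matrix (Fin d) (Fin k) ℝ) : ℝ :=
  ⨅ p : Fin n × Fin n, phi x y α β U p.1 p.2

/-- Membership in the (relatively open) simplex `Δ^n`. -/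
def inSimplex {n : ℕ} (r : Fin n → ℝ) : Prop :=
  (∑ i, r i) = 1 ∧ ∀ i, 0 < r i

/-- Membership in the transportation polytope `Π(r, c)`. -/
def inPlans {n : ℕ} (r c : Fin n → ℝ) (π : Matrix (Fin n) (Fin n) ℝ) : Prop :=
  (∀ i, ∑ j, π i j = r i) ∧ (∀ j, ∑ i, π i j = c j) ∧ ∀ i j, 0 ≤ π i j

/-- `ℓ₁` norm of a matrix. -/
def l1norm {n : ℕ} (A : Matrix (Fin n) (Fin n) ℝ) : ℝ := ∑ i, ∑ j, |A i j|

/-- `ζ_η(x, κ)_ij = κ_ij exp(-φ_ij(x)/η)`. -/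
def zeta {n d k : ℕ} (η : ℝ) (κ : Matrix (Fin n) (Fin n) ℝ) (x y : Fin n → Fin d → ℝ)
    (α β : Fin n → ℝ) (U : Matrix (Fin d) (Fin k) ℝ) : Matrix (Fin n) (Fin n) ℝ :=
  fun i j => κ i j * Real.exp (-(phi x y α β U i j) / η)

/-- `L_η((α,β,U), κ) = rᵀα + cᵀβ + η log ‖ζ_η((α,β,U),κ)‖₁`. -/
def Lfun {n d k : ℕ} (η : ℝ) (κ : Matrix (Fin n) (Fin n) ℝ) (r c : Fin n → ℝ)
    (x y : Fin n → Fin d → ℝ) (α β : Fin n → ℝ) (U : Matrix (Fin d) (Fin k) ℝ) : ℝ :=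
  (∑ i, r i * α i) + (∑ j, c j * β j) + η * Real.log (l1norm (zeta η κ x y α β U))

/-- `π_η(x, κ) = ζ_η(x,κ)/‖ζ_η(x,κ)‖₁`. -/
def piEta {n d k : ℕ} (η : ℝ) (κ : Matrix (Fin n) (Fin n) ℝ) (x y : Fin n → Fin d → ℝ)
    (α β : Fin n → ℝ) (U : Matrix (Fin d) (Fin k) ℝ) : Matrix (Fin n) (Fin n) ℝ :=
  fun i j => zeta η κ x y α β U i j / l1norm (zeta η κ x y α β U)

/-- Entropy `H(π) = -Σ_ij π_ij log π_ij` (with the convention `0 log 0 = 0`,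
which holds since `Real.log 0 = 0`). -/
def entropy {n : ℕ} (π : Matrix (Fin n) (Fin n) ℝ) : ℝ :=
  -∑ i, ∑ j, π i j * Real.log (π i j)

/-- `h(π, U) = ⟨C(U) - η log κ, π⟩ - η H(π)`. -/
def hObj {n d k : ℕ} (η : ℝ) (κ : Matrix (Fin n) (Fin n) ℝ) (x y : Fin n → Fin d → ℝ)
    (U : Matrix (Fin d) (Fin k) ℝ) (π : Matrix (Fin n) (Fin n) ℝ) : ℝ :=
  (∑ i, ∑ j, (costCU x y U i j - η * Real.log (κ i j)) * π i j) - η * entropy π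

/-- `‖π 1 - r‖₁`, the row-sum feasibility residual. -/
def rowRes {n : ℕ} (r : Fin n → ℝ) (π : Matrix (Fin n) (Fin n) ℝ) : ℝ :=
  ∑ i, |(∑ j, π i j) - r i|

/-- `‖πᵀ 1 - c‖₁`, the column-sum feasibility residual. -/
def colRes {n : ℕ} (c : Fin n → ℝ) (π : Matrix (Fin n) (Fin n) ℝ) : ℝ :=
  ∑ j, |(∑ i, π i j) - c j|

/-- Variation seminorm `‖v‖_var = max_i v_i - min_i v_i` of a vector. -/
def varVec {n : ℕ} (v : Fin n → ℝ) : ℝ := (⨆ i, v i) - (⨅ i, v i)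

/-- `‖log κ‖_var = max_{ij} log κ_ij - min_{ij} log κ_ij`. -/
def varLog {n : ℕ} (κ : Matrix (Fin n) (Fin n) ℝ) : ℝ :=
  (⨆ p : Fin n × Fin n, Real.log (κ p.1 p.2)) - (⨅ p : Fin n × Fin n, Real.log (κ p.1 p.2))

/-- `‖log κ‖_∞ = max_{ij} |log κ_ij|`. -/
def logInf {n : ℕ} (κ : Matrix (Fin n) (Fin n) ℝ) : ℝ :=
  ⨆ p : Fin n × Fin n, |Real.log (κ p.1 p.2)|

/-- Frobenius norm of a matrix. -/
def frobNorm {d k : ℕ} (A : Matrix (Fin d) (Fin k) ℝ) : ℝ :=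
  Real.sqrt (∑ l, ∑ m, (A l m) ^ 2)

/-- `V_π = Σ_ij π_ij M_ij` with `M_ij = (x_i - y_j)(x_i - y_j)ᵀ`. -/
def Vmat {n d : ℕ} (x y : Fin n → Fin d → ℝ) (π : Matrix (Fin n) (Fin n) ℝ) :
    Matrix (Fin d) (Fin d) ℝ :=
  fun l l' => ∑ i, ∑ j, π i j * ((x i l - y j l) * (x i l' - y j l'))

/-- Projection onto the tangent space of the Stiefel manifold at `U`:
`Proj_{T_U S}(A) = A - U (UᵀA + AᵀU)/2`. -/
def projTan {d k : ℕ} (U A : Matrix (Fin d) (Fin k) ℝ) : Matrix (Fin d) (Fin k) ℝ :=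
  A - (1 / 2 : ℝ) • (U * (Uᵀ * A + Aᵀ * U))

/-- Transport plan `(u_i A_ij v_j)_{ij}` normalized to total mass one. -/
def sinkMat {n : ℕ} (A : Matrix (Fin n) (Fin n) ℝ) (u v : Fin n → ℝ) :
    Matrix (Fin n) (Fin n) ℝ :=
  fun i j => u i * A i j * v j / (∑ i', ∑ j', u i' * A i' j' * v j')


/-! ### Auxiliary lemmas for Statement 14 -/

section Aux14

/-- View a matrix as a vector in Euclidean space. -/
def toEuc {d k : ℕ} (A : Matrix (Fin d) (Fin k) ℝ) : EuclideanSpace ℝ (Fin d × Fin k) :=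
  (WithLp.equiv 2 _).symm (fun p => A p.1 p.2)

lemma frobNorm_eq {d k : ℕ} (A : Matrix (Fin d) (Fin k) ℝ) : frobNorm A = ‖toEuc A‖ := by
  rw [EuclideanSpace.norm_eq]
  simp [frobNorm, toEuc, Fintype.sum_prod_type, Real.norm_eq_abs, sq_abs]

lemma toEuc_add {d k : ℕ} (A B : Matrix (Fin d) (Fin k) ℝ) :
    toEuc (A + B) = toEuc A + toEuc B := rfl

lemma toEuc_smul {d k : ℕ} (c : ℝ) (A : Matrix (Fin d) (Fin k) ℝ) :
    toEuc (c • A) = c • toEuc A := rfl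

lemma frobNorm_add_le {d k : ℕ} (A B : Matrix (Fin d) (Fin k) ℝ) :
    frobNorm (A + B) ≤ frobNorm A + frobNorm B := by
  rw [frobNorm_eq, frobNorm_eq, frobNorm_eq, toEuc_add]; exact norm_add_le _ _

lemma frobNorm_smul {d k : ℕ} (c : ℝ) (A : Matrix (Fin d) (Fin k) ℝ) :
    frobNorm (c • A) = |c| * frobNorm A := by
  rw [frobNorm_eq, frobNorm_eq, toEuc_smul, norm_smul, Real.norm_eq_abs]

lemma frobNorm_zero' {d k : ℕ} : frobNorm (0 : Matrix (Fin d) (Fin k) ℝ) = 0 := by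
  simp [frobNorm]

lemma frobNorm_sum_le {d k : ℕ} {ι : Type*} (s : Finset ι)
    (f : ι → Matrix (Fin d) (Fin k) ℝ) :
    frobNorm (∑ i ∈ s, f i) ≤ ∑ i ∈ s, frobNorm (f i) := by
  classical
  induction s using Finset.induction_on with
  | empty => simp [frobNorm_zero']
  | insert a s h ih =>
      rw [Finset.sum_insert h, Finset.sum_insert h]
      exact (frobNorm_add_le _ _).trans (by linarith)

lemma sq_eq_trace {d k : ℕ} (X : Matrix (Fin d) (Fin k) ℝ) :
    (∑ l, ∑ m, (X l m) ^ 2) = Matrix.trace (Xᵀ * X) := by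
  simp only [Matrix.trace, Matrix.diag, Matrix.mul_apply, Matrix.transpose_apply, pow_two]
  exact Finset.sum_comm

lemma frobNorm_projTan_le {d k : ℕ} (U A : Matrix (Fin d) (Fin k) ℝ) (hU : Uᵀ * U = 1) :
    frobNorm (projTan U A) ≤ frobNorm A := by
  set B : Matrix (Fin k) (Fin k) ℝ := Uᵀ * A with hB
  set S : Matrix (Fin k) (Fin k) ℝ := (1 / 2 : ℝ) • (B + Bᵀ) with hS
  have hBT : Aᵀ * U = Bᵀ := by rw [hB, Matrix.transpose_mul, Matrix.transpose_transpose]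
  have hSsymm : Sᵀ = S := by
    rw [hS, Matrix.transpose_smul, Matrix.transpose_add, Matrix.transpose_transpose, add_comm]
  have hPA : projTan U A = A - U * S := by
    rw [projTan, hS, Matrix.mul_smul, hBT, hB]
  have h2S : B + Bᵀ = (2 : ℝ) • S := by
    rw [hS, smul_smul]; norm_num
  have htr : Matrix.trace ((projTan U A)ᵀ * projTan U A)
      = Matrix.trace (Aᵀ * A) - Matrix.trace (Sᵀ * S) := by
    rw [hPA]
    have hexp : (A - U * S)ᵀ * (A - U * S)
        = Aᵀ * A - Aᵀ * (U * S) - (S * Uᵀ) * A + (S * Uᵀ) * (U * S) := by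
      rw [Matrix.transpose_sub, Matrix.transpose_mul, hSsymm]
      rw [Matrix.sub_mul, Matrix.mul_sub, Matrix.mul_sub]
      abel
    rw [hexp, Matrix.trace_add, Matrix.trace_sub, Matrix.trace_sub]
    have h1 : Aᵀ * (U * S) = Bᵀ * S := by rw [← Matrix.mul_assoc, hBT]
    have h2 : (S * Uᵀ) * A = S * B := by rw [Matrix.mul_assoc, hB]
    have h3 : (S * Uᵀ) * (U * S) = S * S := by
      rw [Matrix.mul_assoc, ← Matrix.mul_assoc Uᵀ U S, hU, Matrix.one_mul]
    rw [h1, h2, h3, hSsymm]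
    have h4 : Matrix.trace (Bᵀ * S) = Matrix.trace (S * Bᵀ) := Matrix.trace_mul_comm _ _
    have h5 : Matrix.trace (S * Bᵀ) + Matrix.trace (S * B) = 2 * Matrix.trace (S * S) := by
      rw [← Matrix.trace_add, ← Matrix.mul_add, add_comm Bᵀ B, h2S, Matrix.mul_smul,
        Matrix.trace_smul]
      simp
    linarith [h4, h5]
  have hSnn : 0 ≤ Matrix.trace (Sᵀ * S) := by
    rw [← sq_eq_trace]
    exact Finset.sum_nonneg fun _ _ => Finset.sum_nonneg fun _ _ => sq_nonneg _
  rw [frobNorm, frobNorm]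
  apply Real.sqrt_le_sqrt
  rw [sq_eq_trace, sq_eq_trace, htr]
  linarith

lemma projTan_add {d k : ℕ} (U A B : Matrix (Fin d) (Fin k) ℝ) :
    projTan U (A + B) = projTan U A + projTan U B := by
  simp only [projTan, Matrix.transpose_add, Matrix.mul_add, Matrix.add_mul, smul_add]
  abel

lemma projSq_le' {d k : ℕ} (U : Matrix (Fin d) (Fin k) ℝ) (hU : Uᵀ * U = 1)
    (w : Fin d → ℝ) : projSq U w ≤ sqnorm w := by
  classical
  set v : Fin k → ℝ := fun m => ∑ l, U l m * w l with hv
  have horth : ∀ m m', (∑ l, U l m * U l m') = if m = m' then (1:ℝ) else 0 := by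
    intro m m'
    have := congrFun (congrFun hU m) m'
    simpa [Matrix.mul_apply, Matrix.transpose_apply, Matrix.one_apply] using this
  set t : Fin d → ℝ := fun l => ∑ m, U l m * v m with ht
  have hmid : (∑ l, w l * t l) = ∑ m, v m ^ 2 := by
    have : (∑ l, w l * t l) = ∑ l, ∑ m, U l m * w l * v m := by
      refine Finset.sum_congr rfl fun l _ => ?_
      rw [ht, Finset.mul_sum]
      exact Finset.sum_congr rfl fun m _ => by ring
    rw [this, Finset.sum_comm]
    refine Finset.sum_congr rfl fun m _ => ?_
    rw [pow_two, hv, ← Finset.sum_mul]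
  have hlast : (∑ l, t l ^ 2) = ∑ m, v m ^ 2 := by
    have : (∑ l, t l ^ 2) = ∑ l, ∑ m, ∑ m', (U l m * U l m') * (v m * v m') := by
      refine Finset.sum_congr rfl fun l _ => ?_
      rw [ht, pow_two, Finset.sum_mul_sum]
      exact Finset.sum_congr rfl fun m _ => Finset.sum_congr rfl fun m' _ => by ring
    rw [this, Finset.sum_comm]
    refine Finset.sum_congr rfl fun m _ => ?_
    rw [Finset.sum_comm]
    have : (∑ m', ∑ l, U l m * U l m' * (v m * v m'))
        = ∑ m', (if m = m' then (1:ℝ) else 0) * (v m * v m') := by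
      refine Finset.sum_congr rfl fun m' _ => ?_
      rw [← Finset.sum_mul, horth]
    rw [this]
    simp [pow_two]
  have hnn : 0 ≤ ∑ l, (w l - t l) ^ 2 :=
    Finset.sum_nonneg fun _ _ => sq_nonneg _
  have hexp : (∑ l, (w l - t l) ^ 2)
      = sqnorm w - 2 * (∑ l, w l * t l) + ∑ l, t l ^ 2 := by
    rw [sqnorm, Finset.mul_sum, ← Finset.sum_sub_distrib, ← Finset.sum_add_distrib]
    exact Finset.sum_congr rfl fun l _ => by ring
  rw [hexp, hmid, hlast] at hnn
  have hps : projSq U w = ∑ m, v m ^ 2 := rfl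
  rw [hps]; linarith

/-- `M_ij U` as a `d × k` matrix. -/
def Nmat {n d k : ℕ} (x y : Fin n → Fin d → ℝ) (U : Matrix (Fin d) (Fin k) ℝ)
    (i j : Fin n) : Matrix (Fin d) (Fin k) ℝ :=
  fun l m => (x i l - y j l) * (∑ l', U l' m * (x i l' - y j l'))

lemma Vmat_mul_eq {n d k : ℕ} (x y : Fin n → Fin d → ℝ) (π : Matrix (Fin n) (Fin n) ℝ)
    (U : Matrix (Fin d) (Fin k) ℝ) :
    Vmat x y π * U = ∑ i, ∑ j, π i j • Nmat x y U i j := by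
  ext l m
  simp only [Matrix.mul_apply, Matrix.sum_apply, Matrix.smul_apply, smul_eq_mul,
    Vmat, Nmat, Finset.sum_mul, Finset.mul_sum]
  rw [Finset.sum_comm]
  refine Finset.sum_congr rfl fun i _ => ?_
  rw [Finset.sum_comm]
  exact Finset.sum_congr rfl fun j _ => Finset.sum_congr rfl fun l' _ => by ring

lemma frobNorm_Nmat_le {n d k : ℕ} (x y : Fin n → Fin d → ℝ)
    (U : Matrix (Fin d) (Fin k) ℝ) (hU : Uᵀ * U = 1) (i j : Fin n) :
    frobNorm (Nmat x y U i j) ≤ costC x y i j := by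
  set w : Fin d → ℝ := fun l => x i l - y j l with hw
  have hsq : (∑ l, ∑ m, (Nmat x y U i j l m) ^ 2) = sqnorm w * projSq U w := by
    rw [sqnorm, projSq, Finset.sum_mul_sum]
    refine Finset.sum_congr rfl fun l _ => Finset.sum_congr rfl fun m _ => ?_
    simp only [Nmat, hw]
    ring
  rw [frobNorm, hsq, costC, ← hw]
  have h1 : projSq U w ≤ sqnorm w := projSq_le' U hU w
  have h2 : 0 ≤ sqnorm w := Finset.sum_nonneg fun _ _ => sq_nonneg _
  have h3 : 0 ≤ projSq U w := Finset.sum_nonneg fun _ _ => sq_nonneg _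
  calc Real.sqrt (sqnorm w * projSq U w)
      ≤ Real.sqrt (sqnorm w * sqnorm w) :=
        Real.sqrt_le_sqrt (mul_le_mul_of_nonneg_left h1 h2)
    _ = sqnorm w := Real.sqrt_mul_self h2

lemma costC_le_CInf {n d : ℕ} (x y : Fin n → Fin d → ℝ) (i j : Fin n) :
    costC x y i j ≤ CInf x y := by
  have : |costC x y i j| ≤ ⨆ p : Fin n × Fin n, |costC x y p.1 p.2| :=
    le_ciSup (f := fun p : Fin n × Fin n => |costC x y p.1 p.2|)
      (Set.Finite.bddAbove (Set.finite_range _)) (i, j)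
  exact (le_abs_self _).trans this

lemma CInf_nonneg {n d : ℕ} (hn : 1 ≤ n) (x y : Fin n → Fin d → ℝ) :
    0 ≤ CInf x y := by
  have i : Fin n := ⟨0, hn⟩
  have : |costC x y i i| ≤ ⨆ p : Fin n × Fin n, |costC x y p.1 p.2| :=
    le_ciSup (f := fun p : Fin n × Fin n => |costC x y p.1 p.2|)
      (Set.Finite.bddAbove (Set.finite_range _)) (i, i)
  exact (abs_nonneg _).trans this

end Aux14

/-- inequality (4.18a) of Theorem 4.8: the Riemannian gradient bound
after rounding. -/
theorem statement14 (n d k : ℕ) (hn : 1 ≤ n) (η : ℝ) (hη : 0 < η)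
    (κ : Matrix (Fin n) (Fin n) ℝ) (hκ : ∀ i j, 0 < κ i j)
    (r c : Fin n → ℝ) (hr : inSimplex r) (hc : inSimplex c)
    (ε1 ε2 : ℝ) (hε1 : 0 ≤ ε1) (hε2 : 0 ≤ ε2)
    (x y : Fin n → Fin d → ℝ) (αt βt : Fin n → ℝ) (Ut : Matrix (Fin d) (Fin k) ℝ)
    (hU : Utᵀ * Ut = 1)
    (hgrad : frobNorm (projTan Ut
        ((-2 : ℝ) • (Vmat x y (piEta η κ x y αt βt Ut) * Ut))) ≤ ε1) :
    ∀ πh : Matrix (Fin n) (Fin n) ℝ, inPlans r c πh →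
      l1norm (πh - piEta η κ x y αt βt Ut) ≤ ε2 →
      frobNorm (projTan Ut ((-2 : ℝ) • (Vmat x y πh * Ut)))
        ≤ ε1 + 2 * CInf x y * ε2 := by
  intro pih hplans hl1
  set piE : Matrix (Fin n) (Fin n) ℝ := piEta η κ x y αt βt Ut with hpiE
  set Dm : Matrix (Fin n) (Fin n) ℝ := pih - piE with hDm
  have hVsplit : Vmat x y pih = Vmat x y piE + Vmat x y Dm := by
    ext l l'
    simp only [Matrix.add_apply, Vmat, hDm, Matrix.sub_apply, ← Finset.sum_add_distrib]
    exact Finset.sum_congr rfl fun i _ => Finset.sum_congr rfl fun j _ => by ring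
  have hdecomp : projTan Ut ((-2 : ℝ) • (Vmat x y pih * Ut))
      = projTan Ut ((-2 : ℝ) • (Vmat x y piE * Ut))
        + projTan Ut ((-2 : ℝ) • (Vmat x y Dm * Ut)) := by
    rw [hVsplit, Matrix.add_mul, smul_add, projTan_add]
  have hCnn : 0 ≤ CInf x y := CInf_nonneg hn x y
  have hkey : frobNorm (Vmat x y Dm * Ut) ≤ CInf x y * l1norm Dm := by
    rw [Vmat_mul_eq]
    calc frobNorm (∑ i, ∑ j, Dm i j • Nmat x y Ut i j)
        ≤ ∑ i, frobNorm (∑ j, Dm i j • Nmat x y Ut i j) := frobNorm_sum_le _ _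
      _ ≤ ∑ i, ∑ j, frobNorm (Dm i j • Nmat x y Ut i j) :=
          Finset.sum_le_sum fun i _ => frobNorm_sum_le _ _
      _ ≤ ∑ i, ∑ j, |Dm i j| * CInf x y := by
          refine Finset.sum_le_sum fun i _ => Finset.sum_le_sum fun j _ => ?_
          rw [frobNorm_smul]
          exact mul_le_mul_of_nonneg_left
            ((frobNorm_Nmat_le x y Ut hU i j).trans (costC_le_CInf x y i j)) (abs_nonneg _)
      _ = CInf x y * l1norm Dm := by
          rw [l1norm, Finset.mul_sum]
          exact Finset.sum_congr rfl fun i _ => by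
            rw [Finset.mul_sum, ← Finset.sum_mul, Finset.sum_mul]
            exact Finset.sum_congr rfl fun j _ => by ring
  have hfinal : frobNorm (projTan Ut ((-2 : ℝ) • (Vmat x y Dm * Ut)))
      ≤ 2 * CInf x y * ε2 := by
    calc frobNorm (projTan Ut ((-2 : ℝ) • (Vmat x y Dm * Ut)))
        ≤ frobNorm ((-2 : ℝ) • (Vmat x y Dm * Ut)) := frobNorm_projTan_le Ut _ hU
      _ = 2 * frobNorm (Vmat x y Dm * Ut) := by rw [frobNorm_smul]; norm_num
      _ ≤ 2 * (CInf x y * l1norm Dm) := by linarith [hkey]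
      _ ≤ 2 * (CInf x y * ε2) := by
          have := mul_le_mul_of_nonneg_left hl1 hCnn
          linarith
      _ = 2 * CInf x y * ε2 := by ring
  calc frobNorm (projTan Ut ((-2 : ℝ) • (Vmat x y pih * Ut)))
      ≤ frobNorm (projTan Ut ((-2 : ℝ) • (Vmat x y piE * Ut)))
        + frobNorm (projTan Ut ((-2 : ℝ) • (Vmat x y Dm * Ut))) := by
        rw [hdecomp]; exact frobNorm_add_le _ _
    _ ≤ ε1 + 2 * CInf x y * ε2 := add_le_add hgrad hfinal


end PRWPaper
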